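/- Every Banach space X has the K_u2-approximation property: for every Banach space Y, every unconditionally 2-compact operator T ∈ K_u2(Y,X) is the limit in the norm ‖·‖_{K_u2} of a sequence of bounded finite-rank operators Y → X. -/

import Mathlib

set_option maxHeartbeats 1000000


noncomputable section

open Filter Topology Metric
open scoped ENNReal NNReal

/-- Membership in the coefficient ball used to form `p`-convex hulls: the closed unit ball
of `c₀` when `p = 1`, and the closed unit ball of `ℓ^{p'}` (with `p' = p/(p-1)` the conjugate
exponent of `p`) when `p ≠ 1`. -/
def InCoeffBall (𝕜 : Type) [RCLike 𝕜] (p : ℝ) (lam : ℕ → 𝕜) : Prop :=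
  if p = 1 then Filter.Tendsto (fun k => ‖lam k‖) Filter.atTop (nhds 0) ∧ ∀ k, ‖lam k‖ ≤ 1
  else Summable (fun k => ‖lam k‖ ^ (p / (p - 1))) ∧ (∑' k, ‖lam k‖ ^ (p / (p - 1))) ≤ 1

/-- The `p`-convex hull `p`-co{x_k} of a sequence `x : ℕ → X`. -/
def pConvHull (𝕜 : Type) [RCLike 𝕜] {X : Type} [NormedAddCommGroup X] [NormedSpace 𝕜 X]
    (p : ℝ) (x : ℕ → X) : Set X :=
  {y | ∃ lam : ℕ → 𝕜, InCoeffBall 𝕜 p lam ∧ HasSum (fun k => lam k • x k) y}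

/-- A sequence is weakly `p`-summable if `∑ₖ ‖x*(x_k)‖^p < ∞` for every functional `x*`. -/
def WeaklyPSummable (𝕜 : Type) [RCLike 𝕜] {X : Type} [NormedAddCommGroup X] [NormedSpace 𝕜 X]
    (p : ℝ) (x : ℕ → X) : Prop :=
  ∀ f : StrongDual 𝕜 X, Summable fun k => ‖f (x k)‖ ^ p

/-- The weak `p`-summability norm `‖(x_k)‖_{p,w}`. -/
def weakPNorm (𝕜 : Type) [RCLike 𝕜] {X : Type} [NormedAddCommGroup X] [NormedSpace 𝕜 X]
    (p : ℝ) (x : ℕ → X) : ℝ :=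
  ⨆ f : {f : StrongDual 𝕜 X // ‖f‖ ≤ 1}, (∑' k, ‖f.1 (x k)‖ ^ p) ^ (1 / p)

/-- A sequence is unconditionally `p`-summable if it is weakly `p`-summable and the weak
`p`-norms of its tails tend to `0`. -/
def UncondPSummable (𝕜 : Type) [RCLike 𝕜] {X : Type} [NormedAddCommGroup X] [NormedSpace 𝕜 X]
    (p : ℝ) (x : ℕ → X) : Prop :=
  WeaklyPSummable 𝕜 p x ∧
    Filter.Tendsto (fun n => weakPNorm 𝕜 p fun k => x (n + k)) Filter.atTop (nhds 0)

/-- A sequence is strongly `p`-summable if `∑ₖ ‖x_k‖^p < ∞`. -/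
def StronglyPSummable {X : Type} [NormedAddCommGroup X] (p : ℝ) (x : ℕ → X) : Prop :=
  Summable fun k => ‖x k‖ ^ p

/-- The strong `p`-summability norm `‖(x_k)‖_p`. -/
def strongPNorm {X : Type} [NormedAddCommGroup X] (p : ℝ) (x : ℕ → X) : ℝ :=
  (∑' k, ‖x k‖ ^ p) ^ (1 / p)

/-- A bounded finite-rank operator. -/
def IsFiniteRankOp (𝕜 : Type) [RCLike 𝕜] {Y X : Type} [NormedAddCommGroup Y] [NormedSpace 𝕜 Y]
    [NormedAddCommGroup X] [NormedSpace 𝕜 X] (T : Y →L[𝕜] X) : Prop :=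
  FiniteDimensional 𝕜 ↥(LinearMap.range (T : Y →ₗ[𝕜] X))

/-- `T` is unconditionally `p`-compact: `T(B_Y) ⊆ p`-co{x_k} for some unconditionally
`p`-summable sequence `(x_k)`. -/
def IsKupOp (𝕜 : Type) [RCLike 𝕜] {Y X : Type} [NormedAddCommGroup Y] [NormedSpace 𝕜 Y]
    [NormedAddCommGroup X] [NormedSpace 𝕜 X] (p : ℝ) (T : Y →L[𝕜] X) : Prop :=
  ∃ x : ℕ → X, UncondPSummable 𝕜 p x ∧ ⇑T '' Metric.closedBall 0 1 ⊆ pConvHull 𝕜 p x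

/-- The `K_up` ideal norm `‖T‖_{K_up}`. -/
def kupNorm (𝕜 : Type) [RCLike 𝕜] {Y X : Type} [NormedAddCommGroup Y] [NormedSpace 𝕜 Y]
    [NormedAddCommGroup X] [NormedSpace 𝕜 X] (p : ℝ) (T : Y →L[𝕜] X) : ℝ :=
  sInf {c : ℝ | ∃ x : ℕ → X, UncondPSummable 𝕜 p x ∧
    ⇑T '' Metric.closedBall 0 1 ⊆ pConvHull 𝕜 p x ∧ c = weakPNorm 𝕜 p x}

/-- `T` is Sinha–Karn `p`-compact: `T(B_Y) ⊆ p`-co{x_k} for some strongly `p`-summable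
sequence `(x_k)`. -/
def IsSKpOp (𝕜 : Type) [RCLike 𝕜] {Y X : Type} [NormedAddCommGroup Y] [NormedSpace 𝕜 Y]
    [NormedAddCommGroup X] [NormedSpace 𝕜 X] (p : ℝ) (T : Y →L[𝕜] X) : Prop :=
  ∃ x : ℕ → X, StronglyPSummable p x ∧ ⇑T '' Metric.closedBall 0 1 ⊆ pConvHull 𝕜 p x

/-- The `SK_p` ideal norm `‖T‖_{SK_p}`. -/
def skpNorm (𝕜 : Type) [RCLike 𝕜] {Y X : Type} [NormedAddCommGroup Y] [NormedSpace 𝕜 Y]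
    [NormedAddCommGroup X] [NormedSpace 𝕜 X] (p : ℝ) (T : Y →L[𝕜] X) : ℝ :=
  sInf {c : ℝ | ∃ x : ℕ → X, StronglyPSummable p x ∧
    ⇑T '' Metric.closedBall 0 1 ⊆ pConvHull 𝕜 p x ∧ c = strongPNorm p x}

/-- `T` is weakly `1`-compact: `T(B_Y) ⊆ 1`-co{x_k} for some weakly `1`-summable `(x_k)`. -/
def IsW1Op (𝕜 : Type) [RCLike 𝕜] {Y X : Type} [NormedAddCommGroup Y] [NormedSpace 𝕜 Y]
    [NormedAddCommGroup X] [NormedSpace 𝕜 X] (T : Y →L[𝕜] X) : Prop :=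
  ∃ x : ℕ → X, WeaklyPSummable 𝕜 1 x ∧ ⇑T '' Metric.closedBall 0 1 ⊆ pConvHull 𝕜 1 x

/-- The `W₁` ideal norm `‖T‖_{W₁}`. -/
def w1Norm (𝕜 : Type) [RCLike 𝕜] {Y X : Type} [NormedAddCommGroup Y] [NormedSpace 𝕜 Y]
    [NormedAddCommGroup X] [NormedSpace 𝕜 X] (T : Y →L[𝕜] X) : ℝ :=
  sInf {c : ℝ | ∃ x : ℕ → X, WeaklyPSummable 𝕜 1 x ∧
    ⇑T '' Metric.closedBall 0 1 ⊆ pConvHull 𝕜 1 x ∧ c = weakPNorm 𝕜 1 x}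

/-- `T` is approximable: an operator-norm limit of bounded finite-rank operators. -/
def IsApproximable (𝕜 : Type) [RCLike 𝕜] {Y X : Type} [NormedAddCommGroup Y] [NormedSpace 𝕜 Y]
    [NormedAddCommGroup X] [NormedSpace 𝕜 X] (T : Y →L[𝕜] X) : Prop :=
  ∃ F : ℕ → Y →L[𝕜] X, (∀ n, IsFiniteRankOp 𝕜 (F n)) ∧
    Filter.Tendsto (fun n => ‖T - F n‖) Filter.atTop (nhds 0)

/-- The (classical, Grothendieck) approximation property. -/
def HasAP (𝕜 : Type) [RCLike 𝕜] (X : Type) [NormedAddCommGroup X] [NormedSpace 𝕜 X] : Prop :=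
  ∀ ε : ℝ, 0 < ε → ∀ K : Set X, IsCompact K →
    ∃ U : X →L[𝕜] X, IsFiniteRankOp 𝕜 U ∧ ∀ x ∈ K, ‖U x - x‖ < ε

/-- The `K_up`-approximation property: every unconditionally `p`-compact operator into `X`
is a `‖·‖_{K_up}`-limit of bounded finite-rank operators. -/
def HasKupAP (𝕜 : Type) [RCLike 𝕜] (p : ℝ) (X : Type) [NormedAddCommGroup X]
    [NormedSpace 𝕜 X] : Prop :=
  ∀ (Y : Type) [NormedAddCommGroup Y] [NormedSpace 𝕜 Y] [CompleteSpace Y],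
    ∀ T : Y →L[𝕜] X, IsKupOp 𝕜 p T →
      ∃ F : ℕ → Y →L[𝕜] X, (∀ n, IsFiniteRankOp 𝕜 (F n)) ∧ (∀ n, IsKupOp 𝕜 p (T - F n)) ∧
        Filter.Tendsto (fun n => kupNorm 𝕜 p (T - F n)) Filter.atTop (nhds 0)

/-- The uniform `K_up`-approximation property: every unconditionally `p`-compact operator
into `X` is an operator-norm limit of bounded finite-rank operators. -/
def HasUniformKupAP (𝕜 : Type) [RCLike 𝕜] (p : ℝ) (X : Type) [NormedAddCommGroup X]
    [NormedSpace 𝕜 X] : Prop :=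
  ∀ (Y : Type) [NormedAddCommGroup Y] [NormedSpace 𝕜 Y] [CompleteSpace Y],
    ∀ T : Y →L[𝕜] X, IsKupOp 𝕜 p T → IsApproximable 𝕜 T

/-- The `SK_p`-approximation property. -/
def HasSKpAP (𝕜 : Type) [RCLike 𝕜] (p : ℝ) (X : Type) [NormedAddCommGroup X]
    [NormedSpace 𝕜 X] : Prop :=
  ∀ (Y : Type) [NormedAddCommGroup Y] [NormedSpace 𝕜 Y] [CompleteSpace Y],
    ∀ T : Y →L[𝕜] X, IsSKpOp 𝕜 p T →
      ∃ F : ℕ → Y →L[𝕜] X, (∀ n, IsFiniteRankOp 𝕜 (F n)) ∧ (∀ n, IsSKpOp 𝕜 p (T - F n)) ∧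
        Filter.Tendsto (fun n => skpNorm 𝕜 p (T - F n)) Filter.atTop (nhds 0)

/-- The `W₁`-approximation property. -/
def HasW1AP (𝕜 : Type) [RCLike 𝕜] (X : Type) [NormedAddCommGroup X] [NormedSpace 𝕜 X] : Prop :=
  ∀ (Y : Type) [NormedAddCommGroup Y] [NormedSpace 𝕜 Y] [CompleteSpace Y],
    ∀ T : Y →L[𝕜] X, IsW1Op 𝕜 T →
      ∃ F : ℕ → Y →L[𝕜] X, (∀ n, IsFiniteRankOp 𝕜 (F n)) ∧ (∀ n, IsW1Op 𝕜 (T - F n)) ∧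
        Filter.Tendsto (fun n => w1Norm 𝕜 (T - F n)) Filter.atTop (nhds 0)

/-- Cotype 2. -/
def HasCotype2 (X : Type) [NormedAddCommGroup X] : Prop :=
  ∃ C : ℝ, 0 < C ∧ ∀ (n : ℕ) (z : Fin n → X),
    (∑ i, ‖z i‖ ^ 2) ^ ((1 : ℝ) / 2) ≤
      C * ((∑ ε : Fin n → Bool, ‖∑ i, (if ε i then z i else -z i)‖ ^ 2) / 2 ^ n) ^ ((1 : ℝ) / 2)

/-- A normed space is reflexive if the canonical embedding into the bidual is surjective. -/
def ReflexiveSpace (𝕜 : Type) [RCLike 𝕜] (X : Type) [NormedAddCommGroup X]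
    [NormedSpace 𝕜 X] : Prop :=
  Function.Surjective ⇑(NormedSpace.inclusionInDoubleDual 𝕜 X)

/-- `T` factors compactly through a closed subspace of `E`: `T = B ∘ A` with `M ⊆ E` a closed
subspace and `A`, `B` compact operators. -/
def FactorsCompactlyThrough (𝕜 : Type) [RCLike 𝕜] (E : Type) [NormedAddCommGroup E]
    [NormedSpace 𝕜 E] {X Y : Type} [NormedAddCommGroup X] [NormedSpace 𝕜 X]
    [NormedAddCommGroup Y] [NormedSpace 𝕜 Y] (T : X →L[𝕜] Y) : Prop :=
  ∃ M : Submodule 𝕜 E, IsClosed (M : Set E) ∧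
    ∃ (A : X →L[𝕜] ↥M) (B : ↥M →L[𝕜] Y),
      IsCompactOperator ⇑A ∧ IsCompactOperator ⇑B ∧ B.comp A = T

/-- The set of numbers `‖A‖ * ‖B‖` over all compact factorizations `T = B ∘ A` of `T` through
a closed subspace of `E`. -/
def factorNorms (𝕜 : Type) [RCLike 𝕜] (E : Type) [NormedAddCommGroup E]
    [NormedSpace 𝕜 E] {X Y : Type} [NormedAddCommGroup X] [NormedSpace 𝕜 X]
    [NormedAddCommGroup Y] [NormedSpace 𝕜 Y] (T : X →L[𝕜] Y) : Set ℝ :=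
  {c : ℝ | ∃ M : Submodule 𝕜 E, IsClosed (M : Set E) ∧
    ∃ (A : X →L[𝕜] ↥M) (B : ↥M →L[𝕜] Y),
      IsCompactOperator ⇑A ∧ IsCompactOperator ⇑B ∧ B.comp A = T ∧ c = ‖A‖ * ‖B‖}



section Aux
variable {𝕜 : Type} [RCLike 𝕜] {X : Type} [NormedAddCommGroup X] [NormedSpace 𝕜 X]

private lemma rpow_two_eq (t : ℝ) : t ^ (2:ℝ) = t ^ 2 := by
  rw [show (2:ℝ) = ((2:ℕ):ℝ) by norm_num, Real.rpow_natCast]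

private lemma uniformBound (x : ℕ → X)
    (hw : ∀ f : StrongDual 𝕜 X, Summable fun k => ‖f (x k)‖ ^ (2:ℝ)) :
    ∃ C : ℝ, 0 ≤ C ∧ ∀ (F : Finset ℕ) (lam : ℕ → 𝕜),
      ‖∑ k ∈ F, lam k • x k‖ ≤ C * Real.sqrt (∑ k ∈ F, ‖lam k‖ ^ 2) := by
  set ι := {q : Finset ℕ × (ℕ → 𝕜) // (∑ k ∈ q.1, ‖q.2 k‖ ^ 2) ≤ 1} with hι
  set z : ι → X := fun i => ∑ k ∈ i.1.1, i.1.2 k • x k with hz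
  set g : ι → StrongDual 𝕜 X →L[𝕜] 𝕜 :=
    fun i => NormedSpace.inclusionInDoubleDual 𝕜 X (z i) with hg
  have hpt : ∀ f : StrongDual 𝕜 X, ∃ C, ∀ i, ‖g i f‖ ≤ C := by
    intro f
    refine ⟨Real.sqrt (∑' k, ‖f (x k)‖ ^ (2:ℝ)), fun i => ?_⟩
    have h1 : ‖g i f‖ = ‖f (z i)‖ := by rw [hg, NormedSpace.dual_def]
    rw [h1, hz]
    calc ‖f (∑ k ∈ i.1.1, i.1.2 k • x k)‖
        = ‖∑ k ∈ i.1.1, i.1.2 k • f (x k)‖ := by rw [map_sum]; simp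
      _ ≤ ∑ k ∈ i.1.1, ‖i.1.2 k‖ * ‖f (x k)‖ := by
          refine (norm_sum_le _ _).trans ?_
          refine Finset.sum_le_sum fun k _ => ?_
          rw [norm_smul]
      _ ≤ Real.sqrt (∑ k ∈ i.1.1, ‖i.1.2 k‖ ^ 2) *
            Real.sqrt (∑ k ∈ i.1.1, ‖f (x k)‖ ^ 2) :=
          Real.sum_mul_le_sqrt_mul_sqrt _ _ _
      _ ≤ 1 * Real.sqrt (∑' k, ‖f (x k)‖ ^ (2:ℝ)) := by
          refine mul_le_mul ?_ ?_ (Real.sqrt_nonneg _) zero_le_one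
          · exact Real.sqrt_le_one.mpr i.2
          · refine Real.sqrt_le_sqrt ?_
            calc (∑ k ∈ i.1.1, ‖f (x k)‖ ^ 2)
                = ∑ k ∈ i.1.1, ‖f (x k)‖ ^ (2:ℝ) := by
                  refine Finset.sum_congr rfl fun k _ => (rpow_two_eq _).symm
              _ ≤ ∑' k, ‖f (x k)‖ ^ (2:ℝ) :=
                  Summable.sum_le_tsum _ (fun k _ => Real.rpow_nonneg (norm_nonneg _) _) (hw f)
      _ = Real.sqrt (∑' k, ‖f (x k)‖ ^ (2:ℝ)) := one_mul _
  obtain ⟨C', hC'⟩ := banach_steinhaus hpt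
  have hnorm : ∀ i : ι, ‖z i‖ ≤ C' := by
    intro i
    have : ‖g i‖ = ‖z i‖ := (NormedSpace.inclusionInDoubleDualLi 𝕜 (E := X)).norm_map (z i)
    rw [← this]; exact hC' i
  refine ⟨max C' 0, le_max_right _ _, fun F lam => ?_⟩
  set s := Real.sqrt (∑ k ∈ F, ‖lam k‖ ^ 2) with hs
  have hsum_nonneg : (0:ℝ) ≤ ∑ k ∈ F, ‖lam k‖ ^ 2 :=
    Finset.sum_nonneg fun k _ => sq_nonneg _
  rcases eq_or_lt_of_le (Real.sqrt_nonneg (∑ k ∈ F, ‖lam k‖ ^ 2)) with h0 | hpos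
  · -- s = 0
    have hsum0 : (∑ k ∈ F, ‖lam k‖ ^ 2) = 0 := by
      have := Real.sqrt_eq_zero hsum_nonneg |>.mp h0.symm
      exact this
    have hzero : ∀ k ∈ F, lam k = 0 := by
      intro k hk
      have := (Finset.sum_eq_zero_iff_of_nonneg (fun k _ => sq_nonneg ‖lam k‖)).mp hsum0 k hk
      have : ‖lam k‖ = 0 := by nlinarith [norm_nonneg (lam k)]
      simpa using this
    have : ∑ k ∈ F, lam k • x k = 0 :=
      Finset.sum_eq_zero fun k hk => by rw [hzero k hk, zero_smul]
    rw [this, norm_zero]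
    exact mul_nonneg (le_max_right _ _) (Real.sqrt_nonneg _)
  · -- s > 0
    have hspos : 0 < s := hpos
    set lam' : ℕ → 𝕜 := fun k => ((s:ℝ) : 𝕜)⁻¹ * lam k with hlam'
    have hprop : (∑ k ∈ F, ‖lam' k‖ ^ 2) ≤ 1 := by
      have hs2 : s ^ 2 = ∑ k ∈ F, ‖lam k‖ ^ 2 := Real.sq_sqrt hsum_nonneg
      have : (∑ k ∈ F, ‖lam' k‖ ^ 2) = (∑ k ∈ F, ‖lam k‖ ^ 2) / s ^ 2 := by
        rw [Finset.sum_div]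
        refine Finset.sum_congr rfl fun k _ => ?_
        rw [hlam']
        simp only [norm_mul, norm_inv, RCLike.norm_ofReal, abs_of_pos hspos]
        rw [mul_pow, inv_pow]
        ring
      rw [this, ← hs2, div_self (by positivity : (0:ℝ) < s^2).ne']
    have hzi : z ⟨(F, lam'), hprop⟩ = ((s:ℝ) : 𝕜)⁻¹ • ∑ k ∈ F, lam k • x k := by
      show ∑ k ∈ F, lam' k • x k = _
      rw [Finset.smul_sum]
      exact Finset.sum_congr rfl fun k _ => mul_smul _ _ _
    have := hnorm ⟨(F, lam'), hprop⟩
    rw [hzi] at this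
    rw [norm_smul, norm_inv, RCLike.norm_ofReal, abs_of_pos hspos] at this
    have h2 : ‖∑ k ∈ F, lam k • x k‖ ≤ s * C' := by
      rw [inv_mul_le_iff₀ hspos] at this
      linarith [this]
    calc ‖∑ k ∈ F, lam k • x k‖ ≤ s * C' := h2
      _ ≤ max C' 0 * s := by
          rw [mul_comm]
          exact mul_le_mul_of_nonneg_right (le_max_left _ _) hspos.le


private lemma summable_of_l2 (x : ℕ → X) {C : ℝ} (hC : 0 ≤ C)
    (hb : ∀ (F : Finset ℕ) (lam : ℕ → 𝕜),
      ‖∑ k ∈ F, lam k • x k‖ ≤ C * Real.sqrt (∑ k ∈ F, ‖lam k‖ ^ 2))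
    [CompleteSpace X]
    (μ : ℕ → 𝕜) (hμ : Summable fun k => ‖μ k‖ ^ 2) :
    Summable (fun k => μ k • x k) ∧
      ‖∑' k, μ k • x k‖ ≤ C * Real.sqrt (∑' k, ‖μ k‖ ^ 2) := by
  have hsum : Summable (fun k => μ k • x k) := by
    rw [summable_iff_vanishing_norm]
    intro ε hε
    have hδ : 0 < (ε / (C + 1)) ^ 2 := by positivity
    obtain ⟨s, hs⟩ := summable_iff_vanishing_norm.mp hμ _ hδ
    refine ⟨s, fun t ht => ?_⟩
    have h1 : ‖∑ k ∈ t, μ k • x k‖ ≤ C * Real.sqrt (∑ k ∈ t, ‖μ k‖ ^ 2) := hb t μ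
    have h2 : (∑ k ∈ t, ‖μ k‖ ^ 2) < (ε / (C + 1)) ^ 2 := by
      have h5 := hs t ht
      have h3 : (0:ℝ) ≤ ∑ k ∈ t, ‖μ k‖ ^ 2 := Finset.sum_nonneg fun k _ => sq_nonneg _
      rwa [Real.norm_of_nonneg h3] at h5
    have h4 : Real.sqrt (∑ k ∈ t, ‖μ k‖ ^ 2) < ε / (C + 1) := by
      rw [show ε / (C+1) = Real.sqrt ((ε/(C+1))^2) from (Real.sqrt_sq (by positivity)).symm]
      exact Real.sqrt_lt_sqrt (Finset.sum_nonneg fun k _ => sq_nonneg _) h2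
    calc ‖∑ k ∈ t, μ k • x k‖ ≤ C * Real.sqrt (∑ k ∈ t, ‖μ k‖ ^ 2) := h1
      _ ≤ (C+1) * Real.sqrt (∑ k ∈ t, ‖μ k‖ ^ 2) := by
          nlinarith [Real.sqrt_nonneg (∑ k ∈ t, ‖μ k‖ ^ 2)]
      _ < (C+1) * (ε / (C+1)) := mul_lt_mul_of_pos_left h4 (by positivity)
      _ = ε := by field_simp
  refine ⟨hsum, ?_⟩
  refine le_of_tendsto' hsum.hasSum.norm (fun t => ?_)
  calc ‖∑ k ∈ t, μ k • x k‖ ≤ C * Real.sqrt (∑ k ∈ t, ‖μ k‖ ^ 2) := hb t μ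
    _ ≤ C * Real.sqrt (∑' k, ‖μ k‖ ^ 2) := by
        refine mul_le_mul_of_nonneg_left (Real.sqrt_le_sqrt ?_) hC
        exact Summable.sum_le_tsum _ (fun k _ => sq_nonneg _) hμ


private lemma lp_two_summable (μ : lp (fun _ : ℕ => 𝕜) 2) :
    Summable fun k => ‖μ k‖ ^ (2:ℕ) := by
  have h := (lp.memℓp μ).summable (p := 2) (by norm_num)
  have : (fun k => ‖μ k‖ ^ (2:ℝ≥0∞).toReal) = fun k => ‖μ k‖ ^ (2:ℕ) := by
    funext k
    rw [show (2:ℝ≥0∞).toReal = (2:ℝ) by norm_num, rpow_two_eq]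
  rwa [this] at h

private lemma lp_two_norm_eq (μ : lp (fun _ : ℕ => 𝕜) 2) :
    ‖μ‖ = Real.sqrt (∑' k, ‖μ k‖ ^ (2:ℕ)) := by
  have h := lp.norm_eq_tsum_rpow (p := 2) (by norm_num) μ
  rw [h, show ENNReal.toReal 2 = (2:ℝ) by norm_num, Real.sqrt_eq_rpow]
  congr 1
  exact tsum_congr fun k => rpow_two_eq _

private lemma exists_Phi (x : ℕ → X) [CompleteSpace X] {C : ℝ} (hC : 0 ≤ C)
    (hb : ∀ (F : Finset ℕ) (lam : ℕ → 𝕜),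
      ‖∑ k ∈ F, lam k • x k‖ ≤ C * Real.sqrt (∑ k ∈ F, ‖lam k‖ ^ 2)) :
    ∃ Φ : (lp (fun _ : ℕ => 𝕜) 2) →L[𝕜] X,
      ∀ μ : lp (fun _ : ℕ => 𝕜) 2, HasSum (fun k => μ k • x k) (Φ μ) := by
  have hsum : ∀ μ : lp (fun _ : ℕ => 𝕜) 2, Summable (fun k => μ k • x k) :=
    fun μ => (summable_of_l2 x hC hb μ (lp_two_summable μ)).1
  set Φ₀ : (lp (fun _ : ℕ => 𝕜) 2) →ₗ[𝕜] X :=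
    { toFun := fun μ => ∑' k, μ k • x k
      map_add' := by
        intro μ ν
        have : (fun k => (μ + ν) k • x k) = fun k => μ k • x k + ν k • x k := by
          funext k
          rw [lp.coeFn_add]
          simp [add_smul]
        simp only [this]
        exact Summable.tsum_add (hsum μ) (hsum ν)
      map_smul' := by
        intro c μ
        have : (fun k => (c • μ) k • x k) = fun k => c • (μ k • x k) := by
          funext k
          rw [lp.coeFn_smul]
          simp [smul_smul]
        simp only [this, RingHom.id_apply]
        exact ((hsum μ).hasSum.const_smul c).tsum_eq } with hΦ₀
  refine ⟨Φ₀.mkContinuous C (fun μ => ?_), fun μ => ?_⟩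
  · have := (summable_of_l2 x hC hb μ (lp_two_summable μ)).2
    rw [lp_two_norm_eq μ]
    exact this
  · exact (hsum μ).hasSum


private lemma exists_lift {Y : Type} [NormedAddCommGroup Y] [NormedSpace 𝕜 Y]
    {H : Type} [NormedAddCommGroup H] [InnerProductSpace 𝕜 H] [CompleteSpace H]
    (Φ : H →L[𝕜] X) (T : Y →L[𝕜] X)
    (hsel : ∀ y : Y, ∃ μ : H, Φ μ = T y ∧ ‖μ‖ ≤ ‖y‖) :
    ∃ S : Y →L[𝕜] H, (∀ y, Φ (S y) = T y) ∧ ∀ y, ‖S y‖ ≤ ‖y‖ := by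
  classical
  set K : Submodule 𝕜 H := LinearMap.ker (Φ : H →ₗ[𝕜] X) with hK
  have hKc : IsClosed (K : Set H) := ContinuousLinearMap.isClosed_ker Φ
  haveI : CompleteSpace K := hKc.completeSpace_coe
  set P : H →L[𝕜] Kᗮ := Submodule.orthogonalProjectionOnto Kᗮ with hP
  choose sfun hs1 hs2 using hsel
  have hker : ∀ v ∈ K, P v = 0 := fun v hv =>
    Submodule.orthogonalProjectionOnto_apply_of_mem_orthogonal
      (K.le_orthogonal_orthogonal hv)
  have hPnorm : ∀ v : H, ‖(P v : H)‖ ≤ ‖v‖ := by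
    intro v
    calc ‖(P v : H)‖ = ‖P v‖ := rfl
      _ ≤ ‖P‖ * ‖v‖ := P.le_opNorm v
      _ ≤ 1 * ‖v‖ := mul_le_mul_of_nonneg_right (Submodule.orthogonalProjectionOnto_norm_le _) (norm_nonneg _)
      _ = ‖v‖ := one_mul _
  have hΦP : ∀ v : H, Φ ((P v : H)) = Φ v := by
    intro v
    have hmem : v - (P v : H) ∈ Kᗮᗮ := Submodule.sub_starProjection_mem_orthogonal (K := Kᗮ) v
    rw [Submodule.orthogonal_orthogonal] at hmem
    have h0 : Φ (v - (P v : H)) = 0 := LinearMap.mem_ker.mp hmem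
    rw [map_sub, sub_eq_zero] at h0
    exact h0.symm
  set Slin : Y →ₗ[𝕜] H :=
    { toFun := fun y => (P (sfun y) : H)
      map_add' := by
        intro y z
        have hmem : sfun (y + z) - sfun y - sfun z ∈ K := by
          refine LinearMap.mem_ker.mpr ?_
          show Φ _ = 0
          simp [map_sub, hs1, map_add]
        have h0 : P (sfun (y + z) - sfun y - sfun z) = 0 := hker _ hmem
        rw [map_sub, map_sub, sub_sub, sub_eq_zero] at h0
        show (↑(P (sfun (y + z))) : H) = ↑(P (sfun y)) + ↑(P (sfun z))
        rw [h0]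
        push_cast
        abel
      map_smul' := by
        intro c y
        have hmem : sfun (c • y) - c • sfun y ∈ K := by
          refine LinearMap.mem_ker.mpr ?_
          show Φ _ = 0
          simp [map_sub, map_smul, hs1]
        have h0 : P (sfun (c • y) - c • sfun y) = 0 := hker _ hmem
        rw [map_sub, sub_eq_zero] at h0
        show (↑(P (sfun (c • y))) : H) = c • ↑(P (sfun y))
        rw [h0, map_smul]
        push_cast
        rfl } with hSlin
  refine ⟨Slin.mkContinuous 1 (fun y => ?_), fun y => ?_, fun y => ?_⟩
  · rw [one_mul]
    exact (hPnorm _).trans (hs2 y)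
  · show Φ ((P (sfun y) : H)) = T y
    rw [hΦP, hs1]
  · show ‖(↑(P (sfun y)) : H)‖ ≤ ‖y‖
    exact (hPnorm _).trans (hs2 y)


private lemma inCoeffBall_two_iff {lam : ℕ → 𝕜} :
    InCoeffBall 𝕜 2 lam ↔
      (Summable fun k => ‖lam k‖ ^ (2:ℕ)) ∧ (∑' k, ‖lam k‖ ^ (2:ℕ)) ≤ 1 := by
  unfold InCoeffBall
  rw [if_neg (by norm_num : (2:ℝ) ≠ 1)]
  have heq : (fun k => ‖lam k‖ ^ ((2:ℝ)/((2:ℝ)-1))) = fun k => ‖lam k‖ ^ (2:ℕ) := by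
    funext k
    rw [show (2:ℝ)/((2:ℝ)-1) = (2:ℝ) by norm_num, rpow_two_eq]
  rw [heq]

private lemma memlp_of_ball {lam : ℕ → 𝕜} (h : InCoeffBall 𝕜 2 lam) :
    Memℓp lam (2:ℝ≥0∞) := by
  refine memℓp_gen ?_
  have h1 := (inCoeffBall_two_iff.mp h).1
  have : (fun k => ‖lam k‖ ^ (2:ℝ≥0∞).toReal) = fun k => ‖lam k‖ ^ (2:ℕ) := by
    funext k
    rw [show (2:ℝ≥0∞).toReal = (2:ℝ) by norm_num, rpow_two_eq]
  rwa [this]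

private lemma norm_le_one_of_ball {lam : ℕ → 𝕜} (h : InCoeffBall 𝕜 2 lam) :
    ‖(⟨lam, memlp_of_ball h⟩ : lp (fun _ : ℕ => 𝕜) 2)‖ ≤ 1 := by
  rw [lp_two_norm_eq]
  exact Real.sqrt_le_one.mpr (inCoeffBall_two_iff.mp h).2

private lemma exists_sel {Y : Type} [NormedAddCommGroup Y] [NormedSpace 𝕜 Y] [CompleteSpace X]
    (x : ℕ → X) (Φ : lp (fun _ : ℕ => 𝕜) 2 →L[𝕜] X)
    (hΦ : ∀ μ : lp (fun _ : ℕ => 𝕜) 2, HasSum (fun k => μ k • x k) (Φ μ))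
    (T : Y →L[𝕜] X)
    (hcov : ⇑T '' Metric.closedBall 0 1 ⊆ pConvHull 𝕜 2 x) :
    ∀ y : Y, ∃ μ : lp (fun _ : ℕ => 𝕜) 2, Φ μ = T y ∧ ‖μ‖ ≤ ‖y‖ := by
  intro y
  by_cases hy : y = 0
  · exact ⟨0, by simp [hy], by simp⟩
  · set c : 𝕜 := ((‖y‖ : ℝ) : 𝕜) with hc
    have hcnorm : ‖c‖ = ‖y‖ := by
      rw [hc, RCLike.norm_ofReal, abs_of_nonneg (norm_nonneg _)]
    have hcne : c ≠ 0 := by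
      intro h0
      rw [h0] at hcnorm
      simp only [norm_zero] at hcnorm
      exact hy (norm_eq_zero.mp hcnorm.symm)
    set y₁ : Y := c⁻¹ • y with hy₁
    have hy₁mem : y₁ ∈ Metric.closedBall (0:Y) 1 := by
      rw [Metric.mem_closedBall, dist_zero_right, hy₁, norm_smul, norm_inv, hcnorm]
      rw [inv_mul_cancel₀ (norm_ne_zero_iff.mpr hy)]
    obtain ⟨lam, hball, hhs⟩ := hcov ⟨y₁, hy₁mem, rfl⟩
    set μ₁ : lp (fun _ : ℕ => 𝕜) 2 := ⟨lam, memlp_of_ball hball⟩ with hμ₁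
    have hμ₁coe : ∀ k, (μ₁ : ℕ → 𝕜) k = lam k := fun k => rfl
    have hΦμ₁ : Φ μ₁ = T y₁ := by
      refine HasSum.unique (hΦ μ₁) ?_
      convert hhs using 1
    refine ⟨c • μ₁, ?_, ?_⟩
    · rw [map_smul, hΦμ₁, ← map_smul, hy₁, smul_smul, mul_inv_cancel₀ hcne, one_smul]
    · rw [norm_smul, hcnorm]
      calc ‖y‖ * ‖μ₁‖ ≤ ‖y‖ * 1 :=
            mul_le_mul_of_nonneg_left (norm_le_one_of_ball hball) (norm_nonneg _)
        _ = ‖y‖ := mul_one _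

private def lpEval (k : ℕ) : lp (fun _ : ℕ => 𝕜) 2 →L[𝕜] 𝕜 :=
  LinearMap.mkContinuous
    { toFun := fun μ => μ k
      map_add' := fun μ ν => by simp only [lp.coeFn_add, Pi.add_apply]
      map_smul' := fun c μ => by simp only [lp.coeFn_smul, Pi.smul_apply, RingHom.id_apply] } 1
    (fun μ => by
      rw [one_mul]
      exact lp.norm_apply_le_norm (by norm_num) μ k)

private lemma lpEval_apply (k : ℕ) (μ : lp (fun _ : ℕ => 𝕜) 2) : lpEval k μ = μ k := rfl

private lemma wpn_nonneg (p : ℝ) (z : ℕ → X) : 0 ≤ weakPNorm 𝕜 p z := by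
  unfold weakPNorm; exact Real.iSup_nonneg fun f =>
    Real.rpow_nonneg (tsum_nonneg fun k => Real.rpow_nonneg (norm_nonneg _) _) _

end Aux


/-- Every Banach space has the `K_u2`-AP. -/
theorem stmt_16 (𝕜 : Type) [RCLike 𝕜] (X : Type) [NormedAddCommGroup X] [NormedSpace 𝕜 X]
    [CompleteSpace X] : HasKupAP 𝕜 2 X := by
  intro Y _ _ _ T hT
  obtain ⟨x, ⟨hw, htail⟩, hcov⟩ := hT
  obtain ⟨C, hC, hb⟩ := uniformBound x hw
  obtain ⟨Φ, hΦ⟩ := exists_Phi x hC hb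
  obtain ⟨S, hS1, hS2⟩ := exists_lift Φ T (exists_sel x Φ hΦ T hcov)
  set G : ℕ → (lp (fun _ : ℕ => 𝕜) 2 →L[𝕜] X) :=
    fun n => ∑ k ∈ Finset.range n, (lpEval k).smulRight (x k) with hG
  set F : ℕ → (Y →L[𝕜] X) := fun n => (G n).comp S with hF
  have hGval : ∀ (n : ℕ) (μ : lp (fun _ : ℕ => 𝕜) 2),
      G n μ = ∑ k ∈ Finset.range n, μ k • x k := by
    intro n μ
    rw [hG]
    simp only [ContinuousLinearMap.coe_sum', Finset.sum_apply,
      ContinuousLinearMap.smulRight_apply]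
    rfl
  have hFval : ∀ (n : ℕ) (y : Y), F n y = ∑ k ∈ Finset.range n, S y k • x k := by
    intro n y; rw [hF]; exact hGval n (S y)
  have hTs : ∀ y : Y, HasSum (fun k => S y k • x k) (T y) := by
    intro y; rw [← hS1 y]; exact hΦ (S y)
  have hwit_unc : ∀ n : ℕ, UncondPSummable 𝕜 2 (fun k => x (n + k)) := by
    intro n
    constructor
    · intro f
      have h1 : Summable fun k => ‖f (x (k + n))‖ ^ (2:ℝ) := (summable_nat_add_iff n).mpr (hw f)
      have heq : (fun k => ‖f (x (n + k))‖ ^ (2:ℝ)) = fun k => ‖f (x (k + n))‖ ^ (2:ℝ) := by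
        funext k; rw [add_comm]
      exact heq ▸ h1
    · have heq : (fun m => weakPNorm 𝕜 2 fun k => x (n + (m + k)))
          = fun m => weakPNorm 𝕜 2 fun k => x ((n + m) + k) := by
        funext m; congr 1; funext k; rw [add_assoc]
      rw [heq]
      have h2 : Tendsto (fun m : ℕ => n + m) atTop atTop := by
        simpa [add_comm] using tendsto_add_atTop_nat n
      exact htail.comp h2
  have hwit_cov : ∀ n : ℕ,
      ⇑(T - F n) '' Metric.closedBall 0 1 ⊆ pConvHull 𝕜 2 (fun k => x (n + k)) := by
    intro n
    rintro _ ⟨y, hy, rfl⟩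
    rw [Metric.mem_closedBall, dist_zero_right] at hy
    have hSy : ‖S y‖ ≤ 1 := (hS2 y).trans hy
    have hsum2 : Summable fun k => ‖S y k‖ ^ (2:ℕ) := lp_two_summable (S y)
    have hsumtail : Summable fun k => ‖S y (n + k)‖ ^ (2:ℕ) := by
      have h1 := (summable_nat_add_iff n).mpr hsum2
      have heq : (fun k => ‖S y (n + k)‖ ^ (2:ℕ)) = fun k => ‖S y (k + n)‖ ^ (2:ℕ) := by
        funext k; rw [add_comm]
      exact heq ▸ h1
    have htot : (∑' k, ‖S y k‖ ^ (2:ℕ)) ≤ 1 := by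
      have h1 : Real.sqrt (∑' k, ‖S y k‖ ^ (2:ℕ)) ≤ 1 := by
        rw [← lp_two_norm_eq]; exact hSy
      have h2 : (0:ℝ) ≤ ∑' k, ‖S y k‖ ^ (2:ℕ) := tsum_nonneg fun k => sq_nonneg _
      nlinarith [Real.sq_sqrt h2, Real.sqrt_nonneg (∑' k, ‖S y k‖ ^ (2:ℕ))]
    have htailsum : (∑' k, ‖S y (n + k)‖ ^ (2:ℕ)) ≤ 1 := by
      have hkey := Summable.sum_add_tsum_nat_add (f := fun k => ‖S y k‖ ^ (2:ℕ)) n hsum2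
      have heq : (∑' k, ‖S y (n + k)‖ ^ (2:ℕ)) = ∑' k, ‖S y (k + n)‖ ^ (2:ℕ) := by
        congr 1; funext k; rw [add_comm]
      rw [heq]
      have hpart : (0:ℝ) ≤ ∑ i ∈ Finset.range n, ‖S y i‖ ^ (2:ℕ) :=
        Finset.sum_nonneg fun i _ => sq_nonneg _
      linarith [htot, hkey]
    refine ⟨fun k => S y (n + k), inCoeffBall_two_iff.mpr ⟨hsumtail, htailsum⟩, ?_⟩
    have h3 : HasSum (fun m => S y (m + n) • x (m + n))
        (T y - ∑ k ∈ Finset.range n, S y k • x k) := by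
      rw [hasSum_nat_add_iff (f := fun k => (S y : ℕ → 𝕜) k • x k) n]
      simpa using hTs y
    have heq : (fun k => S y (n + k) • x (n + k)) = fun m => S y (m + n) • x (m + n) := by
      funext k; rw [add_comm]
    have h4 : (T - F n) y = T y - ∑ k ∈ Finset.range n, S y k • x k := by
      rw [ContinuousLinearMap.sub_apply, hFval]
    rw [heq, h4]
    exact h3
  refine ⟨F, ?_, ?_, ?_⟩
  · intro n
    unfold IsFiniteRankOp
    have hfin : (x '' Set.Iio n).Finite := (Set.finite_Iio n).image x
    haveI := FiniteDimensional.span_of_finite 𝕜 hfin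
    refine Submodule.finiteDimensional_of_le
      (?_ : _ ≤ Submodule.span 𝕜 (x '' Set.Iio n))
    rintro _ ⟨y, rfl⟩
    show F n y ∈ _
    rw [hFval]
    refine Submodule.sum_mem _ fun k hk => Submodule.smul_mem _ _ ?_
    exact Submodule.subset_span ⟨k, Finset.mem_range.mp hk, rfl⟩
  · intro n
    exact ⟨fun k => x (n + k), hwit_unc n, hwit_cov n⟩
  · have hub : ∀ n, kupNorm 𝕜 2 (T - F n) ≤ weakPNorm 𝕜 2 fun k => x (n + k) := by
      intro n
      refine csInf_le ⟨0, ?_⟩ ⟨fun k => x (n + k), hwit_unc n, hwit_cov n, rfl⟩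
      rintro c ⟨z, _, _, rfl⟩
      exact wpn_nonneg 2 z
    have hlb : ∀ n, 0 ≤ kupNorm 𝕜 2 (T - F n) := by
      intro n
      refine Real.sInf_nonneg ?_
      rintro c ⟨z, _, _, rfl⟩
      exact wpn_nonneg 2 z
    exact squeeze_zero hlb hub htail

end
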